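/- Let G be a simple graph on a finite vertex set V with |V| = n, let Δ ≥ 1 be an integer and α ∈ [0,1] a real number. Assume there exists a set V' ⊆ V with |V'| ≥ (1−α)·n such that deg(v) ≥ Δ − 1 for every v ∈ V'. Then G has a dominating set R ⊆ V of size |R| ≤ ((1−α)·(1 + ln Δ)/Δ + α)·n. -/

import Mathlib

open Finset

private lemma sum_w_total {ι : Type*} [DecidableEq ι] (S : Finset ι) (p q : ℝ) :
    ∑ X ∈ S.powerset, p ^ X.card * q ^ (S \ X).card = (p + q) ^ S.card := by
  calc ∑ X ∈ S.powerset, p ^ X.card * q ^ (S \ X).card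
      = ∑ X ∈ S.powerset, (∏ _i ∈ X, p) * ∏ _i ∈ S \ X, q := by
        simp [Finset.prod_const]
    _ = ∏ _i ∈ S, (p + q) := (Finset.prod_add _ _ _).symm
    _ = (p + q) ^ S.card := by simp [Finset.prod_const]

private lemma sum_w_mem {ι : Type*} [DecidableEq ι] (S : Finset ι) (u : ι) (hu : u ∈ S)
    (p q : ℝ) (hpq : p + q = 1) :
    ∑ X ∈ S.powerset, (if u ∈ X then p ^ X.card * q ^ (S \ X).card else 0) = p := by
  have h := Finset.prod_add (fun _ : ι => p) (fun i : ι => if i = u then 0 else q) S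
  have hL : ∏ i ∈ S, ((fun _ : ι => p) i + (fun i : ι => if i = u then 0 else q) i) = p := by
    calc ∏ i ∈ S, (p + if i = u then 0 else q)
        = (p + if u = u then 0 else q) * ∏ i ∈ S.erase u, (p + if i = u then 0 else q) :=
          (Finset.mul_prod_erase S _ hu).symm
      _ = p * ∏ _i ∈ S.erase u, (1 : ℝ) := by
          rw [if_pos rfl, add_zero]
          congr 1
          refine Finset.prod_congr rfl fun i hi => ?_
          rw [if_neg (Finset.ne_of_mem_erase hi), hpq]
      _ = p := by simp
  rw [hL] at h
  refine Eq.trans (Finset.sum_congr rfl fun X hX => ?_) h.symm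
  rw [Finset.mem_powerset] at hX
  by_cases hu' : u ∈ X
  · have h2 : ∏ i ∈ S \ X, (if i = u then 0 else q) = q ^ (S \ X).card := by
      rw [Finset.prod_congr rfl fun i hi =>
        if_neg fun h' => (Finset.mem_sdiff.mp hi).2 (h' ▸ hu')]
      exact Finset.prod_const q
    rw [if_pos hu', Finset.prod_const p, h2]
  · rw [if_neg hu']
    refine (mul_eq_zero_of_right _ ?_).symm
    exact Finset.prod_eq_zero (Finset.mem_sdiff.mpr ⟨hu, hu'⟩) (if_pos rfl)

private lemma sum_w_disj {ι : Type*} [DecidableEq ι] (S T : Finset ι) (hT : T ⊆ S)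
    (p q : ℝ) (hpq : p + q = 1) :
    ∑ X ∈ S.powerset, (if X ∩ T = ∅ then p ^ X.card * q ^ (S \ X).card else 0)
      = q ^ T.card := by
  have h := Finset.prod_add (fun i : ι => if i ∈ T then 0 else p) (fun _ : ι => q) S
  have hL : ∏ i ∈ S, ((fun i : ι => if i ∈ T then 0 else p) i + (fun _ : ι => q) i)
      = q ^ T.card := by
    calc ∏ i ∈ S, ((if i ∈ T then 0 else p) + q)
        = (∏ i ∈ S \ T, ((if i ∈ T then 0 else p) + q)) *
            ∏ i ∈ T, ((if i ∈ T then 0 else p) + q) := (Finset.prod_sdiff hT).symm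
      _ = (∏ _i ∈ S \ T, (1 : ℝ)) * ∏ _i ∈ T, q := by
          congr 1
          · refine Finset.prod_congr rfl fun i hi => ?_
            rw [if_neg (Finset.mem_sdiff.mp hi).2]
            exact hpq
          · refine Finset.prod_congr rfl fun i hi => ?_
            rw [if_pos hi, zero_add]
      _ = q ^ T.card := by simp [Finset.prod_const]
  rw [hL] at h
  refine Eq.trans (Finset.sum_congr rfl fun X hX => ?_) h.symm
  by_cases hd : X ∩ T = ∅
  · have h2 : ∏ i ∈ X, (if i ∈ T then 0 else p) = p ^ X.card := by
      rw [Finset.prod_congr rfl fun i hi =>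
        if_neg fun h' => Finset.notMem_empty i (hd ▸ Finset.mem_inter.mpr ⟨hi, h'⟩)]
      exact Finset.prod_const p
    rw [if_pos hd, h2, Finset.prod_const q]
  · rw [if_neg hd]
    refine (mul_eq_zero_of_left ?_ _).symm
    obtain ⟨i, hi⟩ := Finset.nonempty_iff_ne_empty.mpr hd
    rw [Finset.mem_inter] at hi
    exact Finset.prod_eq_zero hi.1 (if_pos hi.2)



/-- If at least `(1−α)·n` of the `n` vertices of `G` have degree at least
`Δ − 1`, then `G` has a dominating set `R` of size at most
`((1−α)·(1 + ln Δ)/Δ + α)·n`. -/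
theorem exists_small_dominating_set
    {V : Type*} [Fintype V] [DecidableEq V] (G : SimpleGraph V) [DecidableRel G.Adj]
    (Δ : ℕ) (hΔ : 1 ≤ Δ) (α : ℝ) (hα0 : 0 ≤ α) (hα1 : α ≤ 1)
    (V' : Finset V) (hV'card : (1 - α) * Fintype.card V ≤ V'.card)
    (hdeg : ∀ v ∈ V', Δ - 1 ≤ G.degree v) :
    ∃ R : Finset V,
      (∀ v : V, v ∉ R → ∃ u ∈ R, G.Adj v u) ∧
      (R.card : ℝ) ≤ ((1 - α) * (1 + Real.log Δ) / Δ + α) * Fintype.card V := by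
  classical
  set S : Finset V := V' with hS
  set p : ℝ := Real.log Δ / Δ with hpdef
  set q : ℝ := 1 - p with hqdef
  have hΔpos : (0:ℝ) < Δ := by exact_mod_cast hΔ
  have hΔ1 : (1:ℝ) ≤ Δ := by exact_mod_cast hΔ
  have hlog0 : 0 ≤ Real.log Δ := Real.log_nonneg hΔ1
  have hlog1 : Real.log Δ ≤ (Δ:ℝ) - 1 := Real.log_le_sub_one_of_pos hΔpos
  have hp0 : 0 ≤ p := div_nonneg hlog0 hΔpos.le
  have hp1 : p ≤ 1 := by rw [hpdef, div_le_one hΔpos]; linarith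
  have hq0 : 0 ≤ q := by rw [hqdef]; linarith
  have hq1 : q ≤ 1 := by rw [hqdef]; linarith
  have hpq : p + q = 1 := by rw [hqdef]; ring
  -- key analytic inequality
  have hqΔ : q ^ Δ ≤ 1 / Δ := by
    have h1 : q ≤ Real.exp (-p) := by
      have := Real.add_one_le_exp (-p); rw [hqdef]; linarith
    have h2 : Real.exp (-p) ^ Δ = Real.exp (-(p * Δ)) := by
      rw [← Real.exp_nat_mul]; ring_nf
    have h3 : p * Δ = Real.log Δ := div_mul_cancel₀ _ hΔpos.ne'
    calc q ^ Δ ≤ Real.exp (-p) ^ Δ := pow_le_pow_left₀ hq0 h1 Δ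
      _ = Real.exp (-(p * Δ)) := h2
      _ = 1 / Δ := by
          rw [h3, Real.exp_neg, Real.exp_log hΔpos, one_div]
  -- closed neighborhoods
  set T : V → Finset V := fun v => insert v (G.neighborFinset v) with hT
  have hTcard : ∀ v ∈ S, Δ ≤ (T v).card := by
    intro v hv
    have h1 : (T v).card = G.degree v + 1 := by
      rw [hT]
      simp only
      rw [Finset.card_insert_of_notMem (G.notMem_neighborFinset_self v),
        G.card_neighborFinset_eq_degree]
    have := hdeg v hv
    omega
  set w : Finset V → ℝ := fun X => p ^ X.card * q ^ (S \ X).card with hw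
  have hw0 : ∀ X, 0 ≤ w X := fun X => mul_nonneg (pow_nonneg hp0 _) (pow_nonneg hq0 _)
  set U : Finset V → Finset V :=
    fun X => S.filter (fun v => T v ⊆ S ∧ T v ∩ X = ∅) with hU
  set g : Finset V → ℝ := fun X => (X.card : ℝ) + ((U X).card : ℝ) with hg
  -- total weight is 1
  have htot : ∑ X ∈ S.powerset, w X = 1 := by
    rw [hw]; rw [sum_w_total, hpq, one_pow]
  -- expectation bound
  have hE : ∑ X ∈ S.powerset, w X * g X ≤ p * S.card + S.card * q ^ Δ := by
    have hsplit : ∑ X ∈ S.powerset, w X * g X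
        = (∑ X ∈ S.powerset, w X * X.card) + ∑ X ∈ S.powerset, w X * ((U X).card : ℝ) := by
      rw [← Finset.sum_add_distrib]
      refine Finset.sum_congr rfl fun X _ => ?_
      rw [hg]; ring
    have hterm1 : ∑ X ∈ S.powerset, w X * (X.card : ℝ) = p * S.card := by
      have h1 : ∀ X ∈ S.powerset, w X * (X.card : ℝ)
          = ∑ u ∈ S, (if u ∈ X then w X else 0) := by
        intro X hX
        rw [Finset.mem_powerset] at hX
        have h2 : ((X.card : ℝ)) = ∑ u ∈ S, (if u ∈ X then (1:ℝ) else 0) := by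
          rw [Finset.sum_boole, Finset.filter_mem_eq_inter,
            Finset.inter_eq_right.mpr hX]
        rw [h2, Finset.mul_sum]
        refine Finset.sum_congr rfl fun u _ => ?_
        split <;> simp
      rw [Finset.sum_congr rfl h1, Finset.sum_comm]
      have h3 : ∀ u ∈ S, ∑ X ∈ S.powerset, (if u ∈ X then w X else 0) = p := by
        intro u hu
        exact sum_w_mem S u hu p q hpq
      rw [Finset.sum_congr rfl h3, Finset.sum_const, nsmul_eq_mul, mul_comm]
    have hterm2 : ∑ X ∈ S.powerset, w X * ((U X).card : ℝ) ≤ S.card * q ^ Δ := by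
      have h1 : ∀ X ∈ S.powerset, w X * ((U X).card : ℝ)
          = ∑ v ∈ S, (if T v ⊆ S ∧ T v ∩ X = ∅ then w X else 0) := by
        intro X _
        have h2 : (((U X).card : ℝ)) = ∑ v ∈ S, (if T v ⊆ S ∧ T v ∩ X = ∅ then (1:ℝ) else 0) := by
          rw [hU]; rw [Finset.sum_boole]
        rw [h2, Finset.mul_sum]
        refine Finset.sum_congr rfl fun v _ => ?_
        split <;> simp
      rw [Finset.sum_congr rfl h1, Finset.sum_comm]
      have h4 : ∀ v ∈ S, ∑ X ∈ S.powerset, (if T v ⊆ S ∧ T v ∩ X = ∅ then w X else 0)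
          ≤ q ^ Δ := by
        intro v hv
        by_cases hvs : T v ⊆ S
        · have h5 : ∀ X ∈ S.powerset, (if T v ⊆ S ∧ T v ∩ X = ∅ then w X else 0)
              = (if X ∩ T v = ∅ then p ^ X.card * q ^ (S \ X).card else 0) := by
            intro X _
            by_cases hd : X ∩ T v = ∅
            · have hd' : T v ∩ X = ∅ := by rwa [Finset.inter_comm] at hd
              rw [if_pos ⟨hvs, hd'⟩, if_pos hd]
            · have hd' : ¬T v ∩ X = ∅ := fun h => hd (by rwa [Finset.inter_comm] at h)
              rw [if_neg (fun h => hd' h.2), if_neg hd]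
          rw [Finset.sum_congr rfl h5, sum_w_disj S (T v) hvs p q hpq]
          exact pow_le_pow_of_le_one hq0 hq1 (hTcard v hv)
        · have h5 : ∀ X ∈ S.powerset, (if T v ⊆ S ∧ T v ∩ X = ∅ then w X else 0) = 0 := by
            intro X _
            rw [if_neg (fun h => hvs h.1)]
          rw [Finset.sum_congr rfl h5, Finset.sum_const, smul_zero]
          positivity
      calc ∑ v ∈ S, ∑ X ∈ S.powerset, (if T v ⊆ S ∧ T v ∩ X = ∅ then w X else 0)
          ≤ ∑ _v ∈ S, q ^ Δ := Finset.sum_le_sum h4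
        _ = S.card * q ^ Δ := by rw [Finset.sum_const, nsmul_eq_mul]
    rw [hsplit, hterm1]
    exact add_le_add_right hterm2 _
  -- pick a minimizing X
  obtain ⟨X₀, hX₀mem, hX₀min⟩ := Finset.exists_min_image S.powerset g
    ⟨∅, Finset.empty_mem_powerset S⟩
  have hgX₀ : g X₀ ≤ p * S.card + S.card * q ^ Δ := by
    refine le_trans ?_ hE
    calc g X₀ = (∑ X ∈ S.powerset, w X) * g X₀ := by rw [htot, one_mul]
      _ = ∑ X ∈ S.powerset, w X * g X₀ := Finset.sum_mul _ _ _
      _ ≤ ∑ X ∈ S.powerset, w X * g X := by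
          refine Finset.sum_le_sum fun X hX => ?_
          exact mul_le_mul_of_nonneg_left (hX₀min X hX) (hw0 X)
  -- the dominating set
  refine ⟨X₀ ∪ U X₀ ∪ Sᶜ, ?_, ?_⟩
  · intro v hv
    simp only [Finset.mem_union, not_or] at hv
    obtain ⟨⟨hvX, hvU⟩, hvSc⟩ := hv
    have hvS : v ∈ S := by
      by_contra h
      exact hvSc (Finset.mem_compl.mpr h)
    rw [hU, Finset.mem_filter, not_and] at hvU
    have hvU' := hvU hvS
    by_cases hvs : T v ⊆ S
    · have hne : T v ∩ X₀ ≠ ∅ := fun h => hvU' ⟨hvs, h⟩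
      obtain ⟨u, hu⟩ := Finset.nonempty_iff_ne_empty.mpr hne
      rw [Finset.mem_inter] at hu
      have hune : u ≠ v := fun h => hvX (h ▸ hu.2)
      have hadj : G.Adj v u := by
        have := hu.1
        rw [hT] at this
        simp only [Finset.mem_insert] at this
        rcases this with h | h
        · exact absurd h hune
        · exact (G.mem_neighborFinset v u).mp h
      exact ⟨u, Finset.mem_union_left _ (Finset.mem_union_left _ hu.2), hadj⟩
    · obtain ⟨u, huT, huS⟩ := Finset.not_subset.mp hvs
      have hune : u ≠ v := fun h => huS (h ▸ hvS)
      have hadj : G.Adj v u := by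
        rw [hT] at huT
        simp only [Finset.mem_insert] at huT
        rcases huT with h | h
        · exact absurd h hune
        · exact (G.mem_neighborFinset v u).mp h
      exact ⟨u, Finset.mem_union_right _ (Finset.mem_compl.mpr huS), hadj⟩
  · -- cardinality bound
    have hcard1 : ((X₀ ∪ U X₀ ∪ Sᶜ).card : ℝ)
        ≤ (X₀.card : ℝ) + ((U X₀).card : ℝ) + (Sᶜ.card : ℝ) := by
      have h1 := Finset.card_union_le (X₀ ∪ U X₀) Sᶜ
      have h2 := Finset.card_union_le X₀ (U X₀)
      push_cast
      have h1' : (((X₀ ∪ U X₀) ∪ Sᶜ).card : ℝ) ≤ ((X₀ ∪ U X₀).card : ℝ) + Sᶜ.card := by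
        exact_mod_cast h1
      have h2' : ((X₀ ∪ U X₀).card : ℝ) ≤ (X₀.card : ℝ) + (U X₀).card := by
        exact_mod_cast h2
      linarith
    have hSn : S.card ≤ Fintype.card V := Finset.card_le_univ S
    have hcompl : ((Sᶜ.card : ℝ)) = (Fintype.card V : ℝ) - S.card := by
      rw [Finset.card_compl, Nat.cast_sub hSn]
    have hmain : (X₀.card : ℝ) + ((U X₀).card : ℝ) ≤ p * S.card + S.card * q ^ Δ := hgX₀
    set m : ℝ := (S.card : ℝ) with hm
    set n : ℝ := (Fintype.card V : ℝ) with hn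
    have hm0 : 0 ≤ m := Nat.cast_nonneg _
    have hmn : m ≤ n := Nat.cast_le.mpr hSn
    have hmα : (1 - α) * n ≤ m := hV'card
    have hL1 : (1 + Real.log Δ) / Δ ≤ 1 := by
      rw [div_le_one hΔpos]; linarith
    have hL0 : 0 ≤ (1 + Real.log Δ) / Δ := by positivity
    have hstep : p * m + m * q ^ Δ ≤ m * ((1 + Real.log Δ) / Δ) := by
      have h6 : m * q ^ Δ ≤ m * (1 / Δ) := mul_le_mul_of_nonneg_left hqΔ hm0
      rw [hpdef]
      have : Real.log ↑Δ / ↑Δ * m + m * (1 / ↑Δ) = m * ((1 + Real.log ↑Δ) / ↑Δ) := by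
        field_simp; ring
      linarith
    calc ((X₀ ∪ U X₀ ∪ Sᶜ).card : ℝ)
        ≤ (X₀.card : ℝ) + ((U X₀).card : ℝ) + (Sᶜ.card : ℝ) := hcard1
      _ ≤ (p * m + m * q ^ Δ) + (n - m) := by rw [hcompl]; linarith
      _ ≤ m * ((1 + Real.log Δ) / Δ) + (n - m) := by linarith
      _ ≤ ((1 - α) * (1 + Real.log Δ) / Δ + α) * n := by
          have hkey : 0 ≤ (m - (1 - α) * n) * (1 - (1 + Real.log Δ) / Δ) :=
            mul_nonneg (by linarith) (by linarith)
          have hexp : ((1 - α) * (1 + Real.log Δ) / Δ + α) * n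
              = (1 - α) * n * ((1 + Real.log Δ) / Δ) + α * n := by ring
          rw [hexp]
          nlinarith
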